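/- Let X, Y be integrable random variables with strictly increasing continuous cdfs. Then X precedes Y in the weak expectile dispersive order (i.e., e_X(v) − e_X(u) ≤ e_Y(v) − e_Y(u) for all 0 < u ≤ 1/2 ≤ v < 1) if and only if X − EX precedes Y − EY in the convex order (i.e., E[φ(X−EX)] ≤ E[φ(Y−EY)] for all convex φ for which both expectations exist). -/

import Mathlib

open MeasureTheory Set Filter Topology

/-- The first-order condition identifying the `α`-expectile of a distribution `P` on `ℝ`. -/
def IsExpectile (P : Measure ℝ) (α t : ℝ) : Prop :=
  α * ∫ x, max (x - t) 0 ∂P = (1 - α) * ∫ x, max (t - x) 0 ∂P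

noncomputable def slP (P : Measure ℝ) (t : ℝ) : ℝ := ∫ x, max (x - t) 0 ∂P
noncomputable def slM (P : Measure ℝ) (t : ℝ) : ℝ := ∫ x, max (t - x) 0 ∂P

set_option linter.unusedSectionVars false

section OneMeasure

variable {P : Measure ℝ} [IsProbabilityMeasure P]

lemma isExp_def {α t : ℝ} : IsExpectile P α t ↔ α * slP P t = (1 - α) * slM P t := Iff.rfl

lemma intP (hI : Integrable id P) (t : ℝ) : Integrable (fun x => max (x - t) 0) P :=
  (hI.sub (integrable_const t)).pos_part

lemma intM (hI : Integrable id P) (t : ℝ) : Integrable (fun x => max (t - x) 0) P :=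
  ((integrable_const t).sub hI).pos_part

lemma slP_sub_slM (hI : Integrable id P) (t : ℝ) :
    slP P t - slM P t = (∫ x, x ∂P) - t := by
  rw [slP, slM, ← integral_sub (intP hI t) (intM hI t)]
  have : ∀ x : ℝ, max (x - t) 0 - max (t - x) 0 = x - t := by
    intro x
    rcases le_total x t with h | h
    · rw [max_eq_right (by linarith), max_eq_left (by linarith)]; ring
    · rw [max_eq_left (by linarith), max_eq_right (by linarith)]; ring
  simp only [this]
  have h2 : Integrable (fun x : ℝ => x) P := hI
  rw [integral_sub h2 (integrable_const t), integral_const]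
  simp

lemma slP_anti (hI : Integrable id P) {t t' : ℝ} (h : t ≤ t') : slP P t' ≤ slP P t := by
  refine integral_mono (intP hI t') (intP hI t) fun x => ?_
  exact max_le_max (by linarith) le_rfl

lemma slM_mono (hI : Integrable id P) {t t' : ℝ} (h : t ≤ t') : slM P t ≤ slM P t' := by
  refine integral_mono (intM hI t) (intM hI t') fun x => ?_
  exact max_le_max (by linarith) le_rfl

lemma slP_lip (hI : Integrable id P) {t t' : ℝ} (h : t ≤ t') :
    slP P t ≤ slP P t' + (t' - t) := by
  have : slP P t ≤ ∫ x, (max (x - t') 0 + (t' - t)) ∂P := by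
    refine integral_mono (intP hI t) ((intP hI t').add (integrable_const _)) fun x => ?_
    simp only []
    rcases le_total x t with hx | hx
    · rw [max_eq_right (by linarith)]
      have := le_max_right (x - t') (0:ℝ); linarith
    · have h1 : x - t ≤ max (x - t') 0 + (t' - t) := by
        have := le_max_left (x - t') (0:ℝ); linarith
      exact max_le h1 (by have := le_max_right (x - t') (0:ℝ); linarith)
  rwa [integral_add (intP hI t') (integrable_const _), integral_const, probReal_univ,
    one_smul] at this
-- cdf facts
lemma cdf_lt_one (hmono : StrictMono fun t : ℝ => (P (Iic t)).toReal) (t : ℝ) :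
    (P (Iic t)).toReal < 1 := by
  have h2 : (P (Iic (t+1))).toReal ≤ 1 := by
    have := measure_mono (subset_univ (Iic (t+1))) (μ := P)
    rw [measure_univ] at this
    exact (ENNReal.toReal_le_toReal (measure_ne_top _ _) (by simp)).2 this |>.trans (by simp)
  exact lt_of_lt_of_le (hmono (by linarith : t < t + 1)) h2

lemma cdf_pos (hmono : StrictMono fun t : ℝ => (P (Iic t)).toReal) (t : ℝ) :
    0 < (P (Iic t)).toReal := by
  have h2 : (0:ℝ) ≤ (P (Iic (t-1))).toReal := ENNReal.toReal_nonneg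
  exact lt_of_le_of_lt h2 (hmono (by linarith : t - 1 < t))

lemma survival_toReal (t : ℝ) : (P (Ioi t)).toReal = 1 - (P (Iic t)).toReal := by
  have h := measure_add_measure_compl (measurableSet_Iic (a := t)) (μ := P)
  rw [compl_Iic, measure_univ] at h
  have := congrArg ENNReal.toReal h
  rw [ENNReal.toReal_add (measure_ne_top _ _) (measure_ne_top _ _)] at this
  simp at this
  linarith

lemma slP_pos (hI : Integrable id P) (hmono : StrictMono fun t : ℝ => (P (Iic t)).toReal)
    (t : ℝ) : 0 < slP P t := by
  have key : (P (Ioi (t+1))).toReal ≤ slP P t := by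
    have h1 : ∫ x, (Ioi (t+1)).indicator (fun _ => (1:ℝ)) x ∂P ≤ slP P t := by
      refine integral_mono ((integrable_const (1:ℝ)).indicator measurableSet_Ioi)
        (intP hI t) fun x => ?_
      rw [indicator_apply]
      split_ifs with h
      · simp only [mem_Ioi] at h
        exact le_max_of_le_left (by linarith)
      · positivity
    rwa [integral_indicator_const (1:ℝ) measurableSet_Ioi, smul_eq_mul, mul_one] at h1
  have h2 : 0 < (P (Ioi (t+1))).toReal := by
    rw [survival_toReal]
    have := cdf_lt_one hmono (t+1)
    linarith
  linarith

lemma slM_pos (hI : Integrable id P) (hmono : StrictMono fun t : ℝ => (P (Iic t)).toReal)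
    (t : ℝ) : 0 < slM P t := by
  have key : (P (Iic (t-1))).toReal ≤ slM P t := by
    have h1 : ∫ x, (Iic (t-1)).indicator (fun _ => (1:ℝ)) x ∂P ≤ slM P t := by
      refine integral_mono ((integrable_const (1:ℝ)).indicator measurableSet_Iic)
        (intM hI t) fun x => ?_
      rw [indicator_apply]
      split_ifs with h
      · simp only [mem_Iic] at h
        exact le_max_of_le_left (by linarith)
      · positivity
    rwa [integral_indicator_const (1:ℝ) measurableSet_Iic, smul_eq_mul, mul_one] at h1
  exact lt_of_lt_of_le (cdf_pos hmono (t-1)) key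

lemma slM_add (hI : Integrable id P) {t t' : ℝ} (h : t ≤ t') :
    slM P t + (t' - t) * (P (Iic t)).toReal ≤ slM P t' := by
  have h1 : ∫ x, (max (t - x) 0 + (Iic t).indicator (fun _ => t' - t) x) ∂P ≤ slM P t' := by
    refine integral_mono ((intM hI t).add ((integrable_const (t'-t)).indicator measurableSet_Iic))
      (intM hI t') fun x => ?_
    simp only [indicator_apply]
    split_ifs with hx
    · simp only [mem_Iic] at hx
      rw [max_eq_left (by linarith), max_eq_left (by linarith)]
      ring_nf; linarith
    · rw [add_zero]
      exact max_le_max (by linarith) le_rfl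
  rwa [integral_add (intM hI t) ((integrable_const (t'-t)).indicator measurableSet_Iic),
    integral_indicator_const (t'-t) measurableSet_Iic, smul_eq_mul, mul_comm] at h1
lemma isExp_P (hI : Integrable id P) {α t : ℝ} (h : IsExpectile P α t) :
    (2*α - 1) * slP P t = (1 - α) * (t - ∫ x, x ∂P) := by
  rw [isExp_def] at h
  have h2 := slP_sub_slM hI t
  linear_combination h - (1 - α) * h2

lemma isExp_M (hI : Integrable id P) {α t : ℝ} (h : IsExpectile P α t) :
    (1 - 2*α) * slM P t = α * ((∫ x, x ∂P) - t) := by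
  rw [isExp_def] at h
  have h2 := slP_sub_slM hI t
  linear_combination α * h2 - h

lemma exp_lt_absurd (hI : Integrable id P) (hmono : StrictMono fun t : ℝ => (P (Iic t)).toReal)
    {α t t' : ℝ} (hα : α ∈ Ioo (0:ℝ) 1) (htt : t < t')
    (h : IsExpectile P α t) (h' : IsExpectile P α t') : False := by
  obtain ⟨hα0, hα1⟩ := hα
  rw [isExp_def] at h h'
  have k1 : α * slP P t' ≤ α * slP P t :=
    mul_le_mul_of_nonneg_left (slP_anti hI htt.le) hα0.le
  have hF := cdf_pos (P := P) hmono t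
  have hψ := slM_add hI htt.le
  have k2 : (1 - α) * slM P t < (1 - α) * slM P t' := by
    apply mul_lt_mul_of_pos_left _ (by linarith)
    nlinarith
  linarith

lemma exp_unique (hI : Integrable id P) (hmono : StrictMono fun t : ℝ => (P (Iic t)).toReal)
    {α t t' : ℝ} (hα : α ∈ Ioo (0:ℝ) 1)
    (h : IsExpectile P α t) (h' : IsExpectile P α t') : t = t' := by
  rcases lt_trichotomy t t' with hc | hc | hc
  · exact (exp_lt_absurd hI hmono hα hc h h').elim
  · exact hc
  · exact (exp_lt_absurd hI hmono hα hc h' h).elim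

lemma exp_half (hI : Integrable id P) {t : ℝ} (h : IsExpectile P (1/2) t) :
    t = ∫ x, x ∂P := by
  have := isExp_P hI h
  norm_num at this
  linarith

lemma exp_exists (hI : Integrable id P) (hmono : StrictMono fun t : ℝ => (P (Iic t)).toReal)
    (s : ℝ) : ∃ α, α ∈ Ioo (0:ℝ) 1 ∧ IsExpectile P α s := by
  have hπ := slP_pos hI hmono s
  have hψ := slM_pos hI hmono s
  refine ⟨slM P s / (slP P s + slM P s), ⟨by positivity, ?_⟩, ?_⟩
  · rw [div_lt_one (by positivity)]; linarith
  · rw [isExp_def]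
    field_simp
    ring

lemma exp_gt_half (hI : Integrable id P) (hmono : StrictMono fun t : ℝ => (P (Iic t)).toReal)
    {α t : ℝ} (hα : α ∈ Ioo (0:ℝ) 1) (h : IsExpectile P α t) (ht : (∫ x, x ∂P) < t) :
    1/2 < α := by
  have h1 := isExp_P hI h
  have hπ := slP_pos hI hmono t
  obtain ⟨hα0, hα1⟩ := hα
  nlinarith

lemma exp_lt_half (hI : Integrable id P) (hmono : StrictMono fun t : ℝ => (P (Iic t)).toReal)
    {α t : ℝ} (hα : α ∈ Ioo (0:ℝ) 1) (h : IsExpectile P α t) (ht : t < ∫ x, x ∂P) :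
    α < 1/2 := by
  have h1 := isExp_M hI h
  have hψ := slM_pos hI hmono t
  obtain ⟨hα0, hα1⟩ := hα
  nlinarith

end OneMeasure

noncomputable def hsum (l : List (ℝ × ℝ)) (x : ℝ) : ℝ :=
  (l.map fun p => p.1 * max (x - p.2) 0).sum

def HasRep (h : ℝ → ℝ) (β : ℝ) : Prop :=
  ∃ A B : ℝ, ∃ l : List (ℝ × ℝ), (∀ p ∈ l, (0:ℝ) ≤ p.1) ∧
    B + (l.map Prod.fst).sum ≤ β ∧ ∀ x, h x = A + B * x + hsum l x

lemma hsum_nil (x : ℝ) : hsum [] x = 0 := rfl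

lemma hsum_cons (p : ℝ × ℝ) (l : List (ℝ × ℝ)) (x : ℝ) :
    hsum (p :: l) x = p.1 * max (x - p.2) 0 + hsum l x := by
  simp [hsum]

lemma hsum_incr {l : List (ℝ × ℝ)} (hc : ∀ p ∈ l, (0:ℝ) ≤ p.1) {x y : ℝ} (hxy : x ≤ y) :
    hsum l y - hsum l x ≤ (l.map Prod.fst).sum * (y - x) := by
  induction l with
  | nil => simp [hsum_nil]
  | cons p l ih =>
    have hp := hc p (by simp)
    have ih' := ih (fun q hq => hc q (by simp [hq]))
    rw [hsum_cons, hsum_cons]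
    simp only [List.map_cons, List.sum_cons]
    have hterm : p.1 * max (y - p.2) 0 - p.1 * max (x - p.2) 0 ≤ p.1 * (y - x) := by
      have : max (y - p.2) 0 - max (x - p.2) 0 ≤ y - x := by
        rcases le_total x p.2 with h | h
        · rw [max_eq_right (show x - p.2 ≤ 0 by linarith), sub_zero]
          exact max_le (by linarith) (by linarith)
        · rw [max_eq_left (show (0:ℝ) ≤ x - p.2 by linarith),
            max_eq_left (show (0:ℝ) ≤ y - p.2 by linarith)]
          linarith
      nlinarith
    nlinarith

lemma hsum_mono {l : List (ℝ × ℝ)} (hc : ∀ p ∈ l, (0:ℝ) ≤ p.1) {x y : ℝ} (hxy : x ≤ y) :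
    hsum l x ≤ hsum l y := by
  induction l with
  | nil => simp [hsum_nil]
  | cons p l ih =>
    have hp := hc p (by simp)
    have ih' := ih (fun q hq => hc q (by simp [hq]))
    rw [hsum_cons, hsum_cons]
    have : max (x - p.2) 0 ≤ max (y - p.2) 0 := max_le_max (by linarith) le_rfl
    nlinarith

lemma hsum_continuous (l : List (ℝ × ℝ)) : Continuous (hsum l) := by
  induction l with
  | nil => exact (continuous_const (y := (0:ℝ))).congr (fun x => (hsum_nil x).symm)
  | cons p l ih =>
    have : Continuous fun x => p.1 * max (x - p.2) 0 :=
      (continuous_const.mul ((continuous_id.sub continuous_const).max continuous_const))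
    exact (this.add ih).congr (fun x => (hsum_cons p l x).symm)

lemma hsum_filter (l : List (ℝ × ℝ)) (c x : ℝ) (hx : x ≤ c) :
    hsum l x = hsum (l.filter fun p => decide (p.2 < c)) x := by
  induction l with
  | nil => simp [hsum_nil]
  | cons p l ih =>
    rw [hsum_cons, List.filter_cons]
    split_ifs with h
    · rw [hsum_cons, ih]
    · simp only [decide_eq_true_eq, not_lt] at h
      rw [ih, max_eq_right (by linarith), mul_zero, zero_add]

lemma hsum_beyond {l : List (ℝ × ℝ)} {c : ℝ} (hl : ∀ p ∈ l, p.2 ≤ c) {x : ℝ} (hx : c ≤ x) :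
    hsum l x = hsum l c + (l.map Prod.fst).sum * (x - c) := by
  induction l with
  | nil => simp [hsum_nil]
  | cons p l ih =>
    have hp := hl p (by simp)
    have ih' := ih (fun q hq => hl q (by simp [hq]))
    rw [hsum_cons, hsum_cons, ih']
    simp only [List.map_cons, List.sum_cons]
    rw [max_eq_left (by linarith), max_eq_left (by linarith)]
    ring

lemma hasRep_mono {h : ℝ → ℝ} {b β : ℝ} (hb : b ≤ β) (hr : HasRep h b) : HasRep h β := by
  obtain ⟨A, B, l, hc, hs, he⟩ := hr
  exact ⟨A, B, l, hc, hs.trans hb, he⟩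

lemma hasRep_congr {h h' : ℝ → ℝ} {β : ℝ} (hhh : ∀ x, h x = h' x) (hr : HasRep h β) :
    HasRep h' β := by
  obtain ⟨A, B, l, hc, hs, he⟩ := hr
  exact ⟨A, B, l, hc, hs, fun x => (hhh x) ▸ he x⟩

lemma filter_fst_sum_nonneg {l : List (ℝ × ℝ)} (hc : ∀ p ∈ l, (0:ℝ) ≤ p.1)
    (q : ℝ × ℝ → Bool) : ((l.filter q).map Prod.fst).sum ≤ (l.map Prod.fst).sum := by
  induction l with
  | nil => simp
  | cons p l ih =>
    have hp := hc p (by simp)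
    have ih' := ih (fun r hr => hc r (by simp [hr]))
    rw [List.filter_cons]
    split_ifs with h
    · simp only [List.map_cons, List.sum_cons]; linarith
    · simp only [List.map_cons, List.sum_cons]; linarith

lemma hasRep_max_line {h : ℝ → ℝ} {b : ℝ} (hr : HasRep h b) (a : ℝ) :
    HasRep (fun x => max (h x) (a + b * x)) b := by
  obtain ⟨A, B, l, hc, hs, he⟩ := hr
  by_cases hB : ∃ x, a + b * x < h x
  · by_cases hA : ∃ x, h x ≤ a + b * x
    · -- crossing case
      -- g = line - h is monotone
      have gmono : ∀ {x y : ℝ}, x ≤ y → (a + b * x - h x) ≤ (a + b * y - h y) := by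
        intro x y hxy
        rw [he x, he y]
        have := hsum_incr hc hxy
        nlinarith
      set c := sSup {x | a + b * x < h x} with hcdef
      have hne : {x | a + b * x < h x}.Nonempty := hB
      have hbdd : BddAbove {x | a + b * x < h x} := by
        obtain ⟨x₀, hx₀⟩ := hA
        refine ⟨x₀, fun y hy => ?_⟩
        by_contra hy2
        push_neg at hy2
        have := gmono hy2.le
        simp only [mem_setOf_eq] at hy
        linarith
      have hlt : ∀ x < c, a + b * x < h x := by
        intro x hx
        obtain ⟨y, hy, hxy⟩ := exists_lt_of_lt_csSup hne hx
        have := gmono hxy.le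
        simp only [mem_setOf_eq] at hy
        linarith
      have hge : ∀ x, c < x → h x ≤ a + b * x := by
        intro x hx
        by_contra hcon
        push_neg at hcon
        exact absurd (le_csSup hbdd hcon) (not_le.2 hx)
      -- continuity gives equality at c
      have hcont : Continuous fun x => a + b * x - h x := by
        have : Continuous h := by
          have : Continuous fun x => A + B * x + hsum l x :=
            (continuous_const.add (continuous_const.mul continuous_id)).add (hsum_continuous l)
          exact this.congr fun x => (he x).symm
        exact (continuous_const.add (continuous_const.mul continuous_id)).sub this
      have heq : a + b * c = h c := by
        have hle : a + b * c - h c ≤ 0 := by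
          have : ∀ᶠ x in 𝓝[<] c, a + b * x - h x ≤ 0 := by
            filter_upwards [self_mem_nhdsWithin] with x hx
            exact le_of_lt (by have := hlt x hx; linarith)
          have h2 : Tendsto (fun x => a + b * x - h x) (𝓝[<] c) (𝓝 (a + b * c - h c)) :=
            (hcont.tendsto c).mono_left nhdsWithin_le_nhds
          exact le_of_tendsto h2 this
        have hge2 : 0 ≤ a + b * c - h c := by
          have : ∀ᶠ x in 𝓝[>] c, 0 ≤ a + b * x - h x := by
            filter_upwards [self_mem_nhdsWithin] with x hx
            have := hge x hx; linarith
          have h2 : Tendsto (fun x => a + b * x - h x) (𝓝[>] c) (𝓝 (a + b * c - h c)) :=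
            (hcont.tendsto c).mono_left nhdsWithin_le_nhds
          exact ge_of_tendsto h2 this
        linarith
      -- build the new representation
      set l' := l.filter (fun p => decide (p.2 < c)) with hl'def
      set cs := b - B - (l'.map Prod.fst).sum with hcsdef
      have hl'c : ∀ p ∈ l', (0:ℝ) ≤ p.1 := fun p hp => hc p (List.mem_of_mem_filter hp)
      have hl'sum : (l'.map Prod.fst).sum ≤ (l.map Prod.fst).sum :=
        filter_fst_sum_nonneg hc _
      have hcs : 0 ≤ cs := by rw [hcsdef]; linarith
      refine ⟨A, B, (cs, c) :: l', ?_, ?_, ?_⟩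
      · intro p hp
        rcases List.mem_cons.1 hp with h1 | h1
        · rw [h1]; exact hcs
        · exact hl'c p h1
      · simp only [List.map_cons, List.sum_cons]
        rw [hcsdef]; linarith
      · intro x
        rcases le_total x c with hx | hx
        · -- here max = h x
          have hmax : max (h x) (a + b * x) = h x := by
            rcases eq_or_lt_of_le hx with rfl | hx'
            · rw [← heq]; exact max_self _
            · exact max_eq_left (hlt x hx').le
          show h x ⊔ (a + b * x) = _
          rw [hmax, he x, hsum_cons]
          rw [max_eq_right (show x - c ≤ 0 by linarith), mul_zero, zero_add]
          rw [hsum_filter l c x hx]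
        · -- here max = line
          have hmax : max (h x) (a + b * x) = a + b * x := by
            rcases eq_or_lt_of_le hx with h' | hx'
            · rw [← h', ← heq]; exact max_self _
            · exact max_eq_right (hge x hx')
          show h x ⊔ (a + b * x) = _
          rw [hmax, hsum_cons]
          have hl'le : ∀ p ∈ l', p.2 ≤ c := by
            intro p hp
            have := List.of_mem_filter hp
            simp only [decide_eq_true_eq] at this
            exact this.le
          rw [hsum_beyond hl'le hx]
          have hcc : A + B * c + hsum l' c = h c := by
            rw [he c, hsum_filter l c c le_rfl]
          rw [max_eq_left (by linarith)]
          have : h c = a + b * c := heq.symm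
          rw [this] at hcc
          rw [hcsdef]
          nlinarith [hcc]
    · -- line always below h
      push_neg at hA
      refine hasRep_congr (fun x => (max_eq_left (hA x).le).symm) ⟨A, B, l, hc, hs, he⟩
  · -- h always below line
    push_neg at hB
    refine hasRep_congr (fun x => (max_eq_right (hB x)).symm) ⟨a, b, [], by simp, by simp, ?_⟩
    intro x; simp [hsum_nil]
section Tangent

variable {φ : ℝ → ℝ}

noncomputable def tder (φ : ℝ → ℝ) (p : ℝ) : ℝ :=
  sInf ((fun y => (φ y - φ p) / (y - p)) '' Ioi p)

lemma tder_nonempty (p : ℝ) : ((fun y => (φ y - φ p) / (y - p)) '' Ioi p).Nonempty :=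
  ⟨_, ⟨p + 1, by simp, rfl⟩⟩

lemma slope_left_le (hφ : ConvexOn ℝ univ φ) {x p y : ℝ} (hx : x < p) (hy : p < y) :
    (φ p - φ x) / (p - x) ≤ (φ y - φ p) / (y - p) := by
  have := hφ.slope_mono_adjacent (mem_univ x) (mem_univ y) hx hy
  exact this

lemma tder_bdd (hφ : ConvexOn ℝ univ φ) (p : ℝ) :
    BddBelow ((fun y => (φ y - φ p) / (y - p)) '' Ioi p) := by
  refine ⟨(φ p - φ (p - 1)) / (p - (p - 1)), fun z hz => ?_⟩
  obtain ⟨y, hy, rfl⟩ := hz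
  exact slope_left_le hφ (by linarith) hy

lemma tder_le_slope (hφ : ConvexOn ℝ univ φ) {p y : ℝ} (h : p < y) :
    tder φ p ≤ (φ y - φ p) / (y - p) :=
  csInf_le (tder_bdd hφ p) ⟨y, h, rfl⟩

lemma slope_le_tder (hφ : ConvexOn ℝ univ φ) {x p : ℝ} (h : x < p) :
    (φ p - φ x) / (p - x) ≤ tder φ p := by
  refine le_csInf (tder_nonempty p) fun z hz => ?_
  obtain ⟨y, hy, rfl⟩ := hz
  exact slope_left_le hφ h hy

lemma tangent_le (hφ : ConvexOn ℝ univ φ) (p x : ℝ) :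
    φ p + tder φ p * (x - p) ≤ φ x := by
  rcases lt_trichotomy x p with h | rfl | h
  · have h1 := slope_le_tder hφ h
    have h2 : 0 < p - x := by linarith
    rw [div_le_iff₀ h2] at h1
    nlinarith
  · simp
  · have h1 := tder_le_slope hφ h
    have h2 : 0 < x - p := by linarith
    rw [le_div_iff₀ h2] at h1
    nlinarith

lemma tder_mono (hφ : ConvexOn ℝ univ φ) : Monotone (tder φ) := by
  intro p q hpq
  rcases eq_or_lt_of_le hpq with rfl | h
  · exact le_rfl
  refine le_csInf (tder_nonempty q) fun z hz => ?_
  obtain ⟨y, hy, rfl⟩ := hz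
  calc tder φ p ≤ (φ q - φ p) / (q - p) := tder_le_slope hφ h
    _ ≤ (φ y - φ q) / (y - q) := hφ.slope_mono_adjacent (mem_univ p) (mem_univ y) h hy

end Tangent

-- the dyadic grid
noncomputable def grid (n : ℕ) : Finset ℝ :=
  (Finset.Icc (-(4^n) : ℤ) (4^n)).image (fun k : ℤ => (k : ℝ) / 2^n)

lemma grid_nonempty (n : ℕ) : (grid n).Nonempty := by
  refine ⟨0, ?_⟩
  simp only [grid, Finset.mem_image]
  exact ⟨0, by simp, by simp⟩

lemma grid_subset (n : ℕ) : grid n ⊆ grid (n + 1) := by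
  intro x hx
  simp only [grid, Finset.mem_image, Finset.mem_Icc] at hx ⊢
  obtain ⟨k, ⟨hk1, hk2⟩, rfl⟩ := hx
  have h4 : (4:ℤ)^(n+1) = 4 * 4^n := by ring
  have h40 : (0:ℤ) ≤ 4^n := by positivity
  refine ⟨2 * k, ⟨by linarith, by linarith⟩, ?_⟩
  push_cast
  field_simp
  ring

noncomputable def tmax (φ : ℝ → ℝ) (n : ℕ) (x : ℝ) : ℝ :=
  (grid n).sup' (grid_nonempty n) (fun p => φ p + tder φ p * (x - p))

lemma tmax_le (hφ : ConvexOn ℝ univ φ) (n : ℕ) (x : ℝ) : tmax φ n x ≤ φ x :=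
  Finset.sup'_le _ _ fun p _ => tangent_le hφ p x

lemma tmax_mono (φ : ℝ → ℝ) (x : ℝ) : Monotone fun n => tmax φ n x := by
  apply monotone_nat_of_le_succ
  intro n
  exact Finset.sup'_mono _ (grid_subset n) (grid_nonempty n)

lemma tmax_hasRep (hφ : ConvexOn ℝ univ φ) (n : ℕ) :
    ∃ β, HasRep (tmax φ n) β := by
  refine ⟨(grid n).sup' (grid_nonempty n) (tder φ), ?_⟩
  have key : ∀ (s : Finset ℝ) (hs : s.Nonempty) (β : ℝ), (∀ p ∈ s, tder φ p ≤ β) →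
      HasRep (fun x => s.sup' hs (fun p => φ p + tder φ p * (x - p))) β := by
    intro s
    induction s using Finset.induction_on_max with
    | empty => intro hs; exact absurd hs (by simp)
    | insert a s ha ih =>
      intro hs β hβ
      rcases s.eq_empty_or_nonempty with rfl | hsne
      · refine hasRep_congr (fun x => ?_) (⟨φ a - tder φ a * a, tder φ a, [], by simp, by
          simpa using hβ a (by simp), fun x => by simp [hsum]; ring⟩ : HasRep
            (fun x => φ a + tder φ a * (x - a)) β)
        simp [Finset.sup'_insert]
      · have hrec : HasRep (fun x => s.sup' hsne (fun p => φ p + tder φ p * (x - p)))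
            (tder φ a) := ih hsne _ (fun p hp => tder_mono hφ (ha p hp).le)
        have h2 := hasRep_max_line hrec (φ a - tder φ a * a)
        refine hasRep_congr (fun x => ?_) (hasRep_mono (hβ a (Finset.mem_insert_self a s)) h2)
        rw [Finset.sup'_insert (H := hsne)]
        rw [max_comm]
        congr 1
        ring
  exact key _ _ _ (fun p hp => Finset.le_sup' _ hp)

lemma tmax_tendsto (hφ : ConvexOn ℝ univ φ) (x : ℝ) :
    Tendsto (fun n => tmax φ n x) atTop (𝓝 (φ x)) := by
  set C := tder φ x - tder φ (x - 1) with hC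
  have hC0 : 0 ≤ C := by
    have := tder_mono hφ (show x - 1 ≤ x by linarith); linarith
  have lower : ∀ᶠ n in atTop, φ x - C * (2^n)⁻¹ ≤ tmax φ n x := by
    obtain ⟨N, hN⟩ := pow_unbounded_of_one_lt (|x| + 1) (show (1:ℝ) < 2 by norm_num)
    filter_upwards [eventually_ge_atTop N] with n hn
    have h2n : |x| + 1 ≤ 2^n := by
      calc |x| + 1 ≤ 2^N := hN.le
      _ ≤ 2^n := by exact pow_le_pow_right₀ (by norm_num) hn
    set p : ℝ := (⌊2^n * x⌋ : ℝ) / 2^n with hp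
    have h2np : (0:ℝ) < 2^n := by positivity
    have h1n : (1:ℝ) ≤ 2^n := one_le_pow₀ (by norm_num)
    have hple : p ≤ x := by
      rw [hp, div_le_iff₀ h2np]
      rw [mul_comm]
      exact Int.floor_le _
    have hinv : ((2:ℝ)^n)⁻¹ * 2^n = 1 := inv_mul_cancel₀ (ne_of_gt h2np)
    have hpge : x - (2^n)⁻¹ < p := by
      rw [hp, lt_div_iff₀ h2np]
      have hfl := Int.lt_floor_add_one ((2:ℝ)^n * x)
      nlinarith [hfl, hinv]
    have hpgrid : p ∈ grid n := by
      simp only [grid, Finset.mem_image, Finset.mem_Icc]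
      refine ⟨⌊2^n * x⌋, ⟨?_, ?_⟩, by push_cast; rfl⟩
      · have h1 : (-(4^n) : ℝ) ≤ (⌊2^n * x⌋ : ℝ) := by
          have hfl : (2:ℝ)^n * x - 1 ≤ (⌊2^n * x⌋ : ℝ) := by
            have := Int.sub_one_lt_floor ((2:ℝ)^n * x); linarith
          have hm1 : (2:ℝ)^n * (-|x|) ≤ 2^n * x :=
            mul_le_mul_of_nonneg_left (neg_abs_le x) h2np.le
          have hm2 : (2:ℝ)^n * |x| ≤ 2^n * (2^n - 1) :=
            mul_le_mul_of_nonneg_left (by linarith) h2np.le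
          have h4 : ((4:ℝ)^n) = 2^n * 2^n := by
            rw [show (4:ℝ) = 2 * 2 by norm_num, mul_pow]
          nlinarith [h1n]
        exact_mod_cast h1
      · have h1 : ((⌊2^n * x⌋ : ℝ)) ≤ (4^n : ℝ) := by
          have hfl : (⌊2^n * x⌋ : ℝ) ≤ 2^n * x := Int.floor_le _
          have hm1 : (2:ℝ)^n * x ≤ 2^n * |x| :=
            mul_le_mul_of_nonneg_left (le_abs_self x) h2np.le
          have hm2 : (2:ℝ)^n * |x| ≤ 2^n * (2^n - 1) :=
            mul_le_mul_of_nonneg_left (by linarith) h2np.le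
          have h4 : ((4:ℝ)^n) = 2^n * 2^n := by
            rw [show (4:ℝ) = 2 * 2 by norm_num, mul_pow]
          nlinarith
        exact_mod_cast h1
    have htan : φ p + tder φ p * (x - p) ≤ tmax φ n x := by
      simp only [tmax]
      exact Finset.le_sup' (fun p => φ p + tder φ p * (x - p)) hpgrid
    have hsub : φ x + tder φ x * (p - x) ≤ φ p := tangent_le hφ x p
    have hinv1 : ((2:ℝ)^n)⁻¹ ≤ 1 := by
      rw [inv_le_one₀ h2np]; exact h1n
    have hmono1 : tder φ (x - 1) ≤ tder φ p := tder_mono hφ (by linarith)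
    have hmono2 : tder φ p ≤ tder φ x := tder_mono hφ hple
    have hxp : 0 ≤ x - p := by linarith
    have hxp2 : x - p ≤ (2^n)⁻¹ := by linarith
    have key : φ x - C * (x - p) ≤ φ p + tder φ p * (x - p) := by
      have hdle : tder φ x - tder φ p ≤ C := by rw [hC]; linarith
      have := mul_le_mul_of_nonneg_right hdle hxp
      nlinarith
    have : C * (x - p) ≤ C * (2^n)⁻¹ := mul_le_mul_of_nonneg_left hxp2 hC0
    clear_value C p
    linarith
  have upper : ∀ n, tmax φ n x ≤ φ x := fun n => tmax_le hφ n x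
  have hlim : Tendsto (fun n => φ x - C * (2^n)⁻¹) atTop (𝓝 (φ x)) := by
    have h1 : Tendsto (fun n : ℕ => ((2:ℝ)^n)⁻¹) atTop (𝓝 0) := by
      simpa using tendsto_pow_atTop_nhds_zero_of_lt_one (show (0:ℝ) ≤ 2⁻¹ by norm_num)
        (show (2:ℝ)⁻¹ < 1 by norm_num) |>.congr (fun n => by rw [inv_pow])
    have := h1.const_mul C
    simpa using (tendsto_const_nhds (x := φ x)).sub this
  exact tendsto_of_tendsto_of_tendsto_of_le_of_le' hlim tendsto_const_nhds lower
    (Eventually.of_forall upper)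

section Integration

variable {P : Measure ℝ} [IsProbabilityMeasure P]

lemma integrable_hsum (hI : Integrable id P) (m : ℝ) (l : List (ℝ × ℝ)) :
    Integrable (fun x => hsum l (x - m)) P := by
  induction l with
  | nil => exact (integrable_const (0:ℝ)).congr (ae_of_all _ fun x => rfl)
  | cons p l ih =>
    have hterm : Integrable (fun x => p.1 * max (x - m - p.2) 0) P :=
      (((hI.sub (integrable_const m)).sub (integrable_const p.2)).pos_part).const_mul p.1
    exact (hterm.add ih).congr (ae_of_all _ fun x => (hsum_cons p l (x - m)).symm)

lemma integral_hsum (hI : Integrable id P) (m : ℝ) (l : List (ℝ × ℝ)) :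
    ∫ x, hsum l (x - m) ∂P = (l.map fun p => p.1 * slP P (m + p.2)).sum := by
  induction l with
  | nil => simp [hsum]
  | cons p l ih =>
    have hterm : Integrable (fun x => p.1 * max (x - m - p.2) 0) P :=
      (((hI.sub (integrable_const m)).sub (integrable_const p.2)).pos_part).const_mul p.1
    have h1 : ∫ x, hsum (p :: l) (x - m) ∂P
        = ∫ x, (p.1 * max (x - m - p.2) 0 + hsum l (x - m)) ∂P :=
      integral_congr_ae (ae_of_all _ fun x => hsum_cons p l (x - m))
    rw [h1, integral_add hterm (integrable_hsum hI m l), ih, integral_const_mul]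
    have h2 : ∫ x, max (x - m - p.2) 0 ∂P = slP P (m + p.2) := by
      rw [slP]; simp only [sub_sub]
    rw [h2]
    simp

lemma hinge_convex (s : ℝ) : ConvexOn ℝ univ (fun x : ℝ => max (x - s) 0) := by
  refine ⟨convex_univ, fun x _ y _ a b ha hb hab => ?_⟩
  simp only [smul_eq_mul]
  have h1 : a * x + b * y - s = a * (x - s) + b * (y - s) := by linear_combination s * hab
  refine max_le ?_ ?_
  · rw [h1]
    exact add_le_add (mul_le_mul_of_nonneg_left (le_max_left _ _) ha)
      (mul_le_mul_of_nonneg_left (le_max_left _ _) hb)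
  · exact add_nonneg (mul_nonneg ha (le_max_right _ _)) (mul_nonneg hb (le_max_right _ _))

lemma hinge_convex' (s : ℝ) : ConvexOn ℝ univ (fun x : ℝ => max (s - x) 0) := by
  refine ⟨convex_univ, fun x _ y _ a b ha hb hab => ?_⟩
  simp only [smul_eq_mul]
  have h1 : s - (a * x + b * y) = a * (s - x) + b * (s - y) := by linear_combination (-s) * hab
  refine max_le ?_ ?_
  · rw [h1]
    exact add_le_add (mul_le_mul_of_nonneg_left (le_max_left _ _) ha)
      (mul_le_mul_of_nonneg_left (le_max_left _ _) hb)
  · exact add_nonneg (mul_nonneg ha (le_max_right _ _)) (mul_nonneg hb (le_max_right _ _))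

end Integration


lemma list_sum_le (l : List (ℝ × ℝ)) (f g : ℝ × ℝ → ℝ) (h : ∀ p ∈ l, f p ≤ g p) :
    (l.map f).sum ≤ (l.map g).sum := by
  induction l with
  | nil => simp
  | cons p l ih =>
    simp only [List.map_cons, List.sum_cons]
    exact add_le_add (h p (by simp)) (ih fun q hq => h q (by simp [hq]))

section Integration2

variable {P : Measure ℝ} [IsProbabilityMeasure P]

lemma integral_rep (hI : Integrable id P) (m A B : ℝ) (l : List (ℝ × ℝ)) :
    ∫ x, (A + B * (x - m) + hsum l (x - m)) ∂P
      = A + B * ((∫ x, x ∂P) - m) + (l.map fun p => p.1 * slP P (m + p.2)).sum := by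
  have hxm : Integrable (fun x : ℝ => x - m) P := hI.sub (integrable_const m)
  have h1 : Integrable (fun x => A + B * (x - m)) P :=
    (integrable_const A).add (hxm.const_mul B)
  rw [integral_add h1 (integrable_hsum hI m l), integral_hsum hI m l]
  congr 1
  have hI' : Integrable (fun x : ℝ => x) P := hI
  rw [integral_add (integrable_const A) (hxm.const_mul B), integral_const,
    integral_const_mul, integral_sub hI' (integrable_const m), integral_const]
  simp [measure_univ]

lemma integrable_rep' (hI : Integrable id P) (m : ℝ) {h : ℝ → ℝ} {β : ℝ} (hr : HasRep h β) :
    Integrable (fun x => h (x - m)) P := by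
  obtain ⟨A, B, l, hc, hs, he⟩ := hr
  exact (((integrable_const A).add ((hI.sub (integrable_const m)).const_mul B)).add
    (integrable_hsum hI m l)).congr (ae_of_all _ fun x => (he (x - m)).symm)

end Integration2

lemma hasRep_integral_le {P Q : Measure ℝ} [IsProbabilityMeasure P] [IsProbabilityMeasure Q]
    (hIP : Integrable id P) (hIQ : Integrable id Q) {mP mQ : ℝ}
    (hmP : (∫ x, x ∂P) = mP) (hmQ : (∫ x, x ∂Q) = mQ)
    (stoploss : ∀ s : ℝ, slP P (mP + s) ≤ slP Q (mQ + s))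
    {h : ℝ → ℝ} {β : ℝ} (hr : HasRep h β) :
    ∫ x, h (x - mP) ∂P ≤ ∫ x, h (x - mQ) ∂Q := by
  obtain ⟨A, B, l, hc, hs, he⟩ := hr
  have eqP : ∫ x, h (x - mP) ∂P
      = A + B * ((∫ x, x ∂P) - mP) + (l.map fun p => p.1 * slP P (mP + p.2)).sum := by
    rw [← integral_rep hIP mP A B l]
    exact integral_congr_ae (ae_of_all _ fun x => he (x - mP))
  have eqQ : ∫ x, h (x - mQ) ∂Q
      = A + B * ((∫ x, x ∂Q) - mQ) + (l.map fun p => p.1 * slP Q (mQ + p.2)).sum := by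
    rw [← integral_rep hIQ mQ A B l]
    exact integral_congr_ae (ae_of_all _ fun x => he (x - mQ))
  rw [eqP, eqQ, hmP, hmQ]
  have hsum_le : (l.map fun p => p.1 * slP P (mP + p.2)).sum
      ≤ (l.map fun p => p.1 * slP Q (mQ + p.2)).sum :=
    list_sum_le l _ _ fun p hp => mul_le_mul_of_nonneg_left (stoploss p.2) (hc p hp)
  simp only [sub_self, mul_zero]
  linarith

/-- for integrable random variables with strictly increasing continuous cdfs,
the weak expectile dispersive order (`e_X(v) − e_X(u) ≤ e_Y(v) − e_Y(u)` for all
`0 < u ≤ 1/2 ≤ v < 1`) holds if and only if `X − EX ≤_cx Y − EY` (the dilation order). -/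
theorem weak_expectile_dispersive_iff_dilation
    (P Q : Measure ℝ) [IsProbabilityMeasure P] [IsProbabilityMeasure Q]
    (hIP : Integrable id P) (hIQ : Integrable id Q)
    (hcontP : Continuous fun t : ℝ => (P (Iic t)).toReal)
    (hmonoP : StrictMono fun t : ℝ => (P (Iic t)).toReal)
    (hcontQ : Continuous fun t : ℝ => (Q (Iic t)).toReal)
    (hmonoQ : StrictMono fun t : ℝ => (Q (Iic t)).toReal)
    (mP mQ : ℝ) (hmP : mP = ∫ x, x ∂P) (hmQ : mQ = ∫ x, x ∂Q)
    (eP eQ : ℝ → ℝ)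
    (heP : ∀ α ∈ Ioo (0 : ℝ) 1, IsExpectile P α (eP α))
    (heQ : ∀ α ∈ Ioo (0 : ℝ) 1, IsExpectile Q α (eQ α)) :
    (∀ u v : ℝ, 0 < u → u ≤ 1 / 2 → 1 / 2 ≤ v → v < 1 →
        eP v - eP u ≤ eQ v - eQ u) ↔
    (∀ φ : ℝ → ℝ, ConvexOn ℝ univ φ →
        Integrable (fun x => φ (x - mP)) P → Integrable (fun x => φ (x - mQ)) Q →
        ∫ x, φ (x - mP) ∂P ≤ ∫ x, φ (x - mQ) ∂Q) := by
  have hmP' : (∫ x, x ∂P) = mP := hmP.symm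
  have hmQ' : (∫ x, x ∂Q) = mQ := hmQ.symm
  have h12 : (1/2 : ℝ) ∈ Ioo (0:ℝ) 1 := by norm_num
  have hP12 : eP (1/2) = mP := by rw [exp_half hIP (heP _ h12), hmP']
  have hQ12 : eQ (1/2) = mQ := by rw [exp_half hIQ (heQ _ h12), hmQ']
  constructor
  · intro H φ hφ hφP hφQ
    have key_pos : ∀ s : ℝ, 0 < s → slP P (mP + s) ≤ slP Q (mQ + s) := by
      intro s hs
      obtain ⟨α, hα, hPexp⟩ := exp_exists hIP hmonoP (mP + s)
      have hePα : eP α = mP + s := exp_unique hIP hmonoP hα (heP α hα) hPexp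
      have hhalf : 1/2 < α := exp_gt_half hIP hmonoP hα hPexp (by rw [hmP']; linarith)
      have hH := H (1/2) α (by norm_num) le_rfl hhalf.le hα.2
      rw [hePα, hP12, hQ12] at hH
      set s' := eQ α - mQ with hs'def
      have hss' : s ≤ s' := by rw [hs'def]; linarith
      have hQeq := isExp_P hIQ (heQ α hα)
      rw [hmQ'] at hQeq
      have hPeq := isExp_P hIP hPexp
      rw [hmP'] at hPeq
      have hPeq2 : (2*α - 1) * slP P (mP + s) = (1 - α) * s := by rw [hPeq]; ring
      have hQeq2 : (2*α - 1) * slP Q (mQ + s') = (1 - α) * s' := by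
        have heq2 : eQ α = mQ + s' := by rw [hs'def]; ring
        rw [heq2] at hQeq; rw [hQeq]; ring
      have hanti : slP Q (mQ + s') ≤ slP Q (mQ + s) := slP_anti hIQ (by linarith)
      have hchain : (2*α - 1) * slP P (mP + s) ≤ (2*α - 1) * slP Q (mQ + s) := by
        have h1 : (1 - α) * s ≤ (1 - α) * s' :=
          mul_le_mul_of_nonneg_left hss' (by linarith [hα.2])
        have h2 : (2*α - 1) * slP Q (mQ + s') ≤ (2*α - 1) * slP Q (mQ + s) :=
          mul_le_mul_of_nonneg_left hanti (by linarith)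
        linarith
      exact le_of_mul_le_mul_left hchain (by linarith)
    have key_neg : ∀ s : ℝ, s < 0 → slP P (mP + s) ≤ slP Q (mQ + s) := by
      intro s hs
      obtain ⟨α, hα, hPexp⟩ := exp_exists hIP hmonoP (mP + s)
      have hePα : eP α = mP + s := exp_unique hIP hmonoP hα (heP α hα) hPexp
      have hhalf : α < 1/2 := exp_lt_half hIP hmonoP hα hPexp (by rw [hmP']; linarith)
      have hH := H α (1/2) hα.1 hhalf.le le_rfl (by norm_num)
      rw [hePα, hP12, hQ12] at hH
      set s' := eQ α - mQ with hs'def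
      have hss' : s' ≤ s := by rw [hs'def]; linarith
      have hQeq := isExp_M hIQ (heQ α hα)
      rw [hmQ'] at hQeq
      have hPeq := isExp_M hIP hPexp
      rw [hmP'] at hPeq
      have hPeq2 : (1 - 2*α) * slM P (mP + s) = α * (-s) := by rw [hPeq]; ring
      have hQeq2 : (1 - 2*α) * slM Q (mQ + s') = α * (-s') := by
        have heq2 : eQ α = mQ + s' := by rw [hs'def]; ring
        rw [heq2] at hQeq; rw [hQeq]; ring
      have hmono : slM Q (mQ + s') ≤ slM Q (mQ + s) := slM_mono hIQ (by linarith)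
      have hchain : (1 - 2*α) * slM P (mP + s) ≤ (1 - 2*α) * slM Q (mQ + s) := by
        have h1 : α * (-s) ≤ α * (-s') :=
          mul_le_mul_of_nonneg_left (by linarith) hα.1.le
        have h2 : (1 - 2*α) * slM Q (mQ + s') ≤ (1 - 2*α) * slM Q (mQ + s) :=
          mul_le_mul_of_nonneg_left hmono (by linarith)
        linarith
      have hM : slM P (mP + s) ≤ slM Q (mQ + s) := le_of_mul_le_mul_left hchain (by linarith)
      have hP3 := slP_sub_slM hIP (mP + s)
      have hQ3 := slP_sub_slM hIQ (mQ + s)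
      rw [hmP'] at hP3; rw [hmQ'] at hQ3
      linarith
    have stoploss : ∀ s : ℝ, slP P (mP + s) ≤ slP Q (mQ + s) := by
      intro s
      rcases lt_trichotomy s 0 with h | rfl | h
      · exact key_neg s h
      · refine le_of_forall_pos_le_add fun ε hε => ?_
        have h1 : slP P (mP + 0) ≤ slP P (mP + ε) + ε := by
          have := slP_lip hIP (show mP + 0 ≤ mP + ε by linarith)
          linarith
        have h2 := key_pos ε hε
        have h3 : slP Q (mQ + ε) ≤ slP Q (mQ + 0) := slP_anti hIQ (by linarith)
        linarith
      · exact key_pos s h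
    choose β hβ using fun n => tmax_hasRep hφ n
    have hint_P : ∀ n, Integrable (fun x => tmax φ n (x - mP)) P :=
      fun n => integrable_rep' hIP mP (hβ n)
    have hint_Q : ∀ n, Integrable (fun x => tmax φ n (x - mQ)) Q :=
      fun n => integrable_rep' hIQ mQ (hβ n)
    have hcomp : ∀ n, ∫ x, tmax φ n (x - mP) ∂P ≤ ∫ x, tmax φ n (x - mQ) ∂Q := fun n =>
      hasRep_integral_le hIP hIQ hmP' hmQ' stoploss (hβ n)
    have htendP : Tendsto (fun n => ∫ x, tmax φ n (x - mP) ∂P) atTop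
        (𝓝 (∫ x, φ (x - mP) ∂P)) :=
      integral_tendsto_of_tendsto_of_monotone hint_P hφP
        (ae_of_all _ fun x a b hab => tmax_mono φ (x - mP) hab)
        (ae_of_all _ fun x => tmax_tendsto hφ (x - mP))
    have htendQ : Tendsto (fun n => ∫ x, tmax φ n (x - mQ) ∂Q) atTop
        (𝓝 (∫ x, φ (x - mQ) ∂Q)) :=
      integral_tendsto_of_tendsto_of_monotone hint_Q hφQ
        (ae_of_all _ fun x a b hab => tmax_mono φ (x - mQ) hab)
        (ae_of_all _ fun x => tmax_tendsto hφ (x - mQ))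
    exact le_of_tendsto_of_tendsto' htendP htendQ hcomp
  · intro Hcx u v hu huv hvv hv
    have stoplossP : ∀ s : ℝ, slP P (mP + s) ≤ slP Q (mQ + s) := by
      intro s
      have h1 := Hcx (fun y => max (y - s) 0) (hinge_convex s)
        (((hIP.sub (integrable_const mP)).sub (integrable_const s)).pos_part)
        (((hIQ.sub (integrable_const mQ)).sub (integrable_const s)).pos_part)
      have h1' : ∫ x, max (x - mP - s) 0 ∂P ≤ ∫ x, max (x - mQ - s) 0 ∂Q := h1
      have e1 : ∫ x, max (x - mP - s) 0 ∂P = slP P (mP + s) := by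
        rw [slP]; simp only [sub_sub]
      have e2 : ∫ x, max (x - mQ - s) 0 ∂Q = slP Q (mQ + s) := by
        rw [slP]; simp only [sub_sub]
      rw [e1, e2] at h1'
      exact h1'
    have stoplossM : ∀ s : ℝ, slM P (mP + s) ≤ slM Q (mQ + s) := by
      intro s
      have hint1 : Integrable (fun x => max (s - (x - mP)) 0) P := by
        refine (((integrable_const (mP + s)).sub hIP).pos_part).congr (ae_of_all _ fun x => ?_)
        show max (mP + s - id x) 0 = max (s - (x - mP)) 0
        have h : mP + s - id x = s - (x - mP) := by simp only [id]; ring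
        rw [h]
      have hint2 : Integrable (fun x => max (s - (x - mQ)) 0) Q := by
        refine (((integrable_const (mQ + s)).sub hIQ).pos_part).congr (ae_of_all _ fun x => ?_)
        show max (mQ + s - id x) 0 = max (s - (x - mQ)) 0
        have h : mQ + s - id x = s - (x - mQ) := by simp only [id]; ring
        rw [h]
      have h1 := Hcx (fun y => max (s - y) 0) (hinge_convex' s) hint1 hint2
      have e1 : ∫ x, max (s - (x - mP)) 0 ∂P = slM P (mP + s) := by
        rw [slM]
        refine integral_congr_ae (ae_of_all _ fun x => ?_)
        show max (s - (x - mP)) 0 = max (mP + s - x) 0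
        have h : s - (x - mP) = mP + s - x := by ring
        rw [h]
      have e2 : ∫ x, max (s - (x - mQ)) 0 ∂Q = slM Q (mQ + s) := by
        rw [slM]
        refine integral_congr_ae (ae_of_all _ fun x => ?_)
        show max (s - (x - mQ)) 0 = max (mQ + s - x) 0
        have h : s - (x - mQ) = mQ + s - x := by ring
        rw [h]
      have h1' : ∫ x, max (s - (x - mP)) 0 ∂P ≤ ∫ x, max (s - (x - mQ)) 0 ∂Q := h1
      rw [e1, e2] at h1'
      exact h1'
    have hvIoo : v ∈ Ioo (0:ℝ) 1 := ⟨by linarith, hv⟩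
    have huIoo : u ∈ Ioo (0:ℝ) 1 := ⟨hu, by linarith⟩
    have claim1 : eP v - mP ≤ eQ v - mQ := by
      rcases eq_or_lt_of_le hvv with heq | hv2
      · rw [← heq, hP12, hQ12]; simp
      · by_contra hcon
        push_neg at hcon
        have hPeq := isExp_P hIP (heP v hvIoo)
        rw [hmP'] at hPeq
        have hQeq := isExp_P hIQ (heQ v hvIoo)
        rw [hmQ'] at hQeq
        have hPeq2 : (2*v - 1) * slP P (mP + (eP v - mP)) = (1 - v) * (eP v - mP) := by
          rw [show mP + (eP v - mP) = eP v from by ring, hPeq]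
        have hQeq2 : (2*v - 1) * slP Q (mQ + (eQ v - mQ)) = (1 - v) * (eQ v - mQ) := by
          rw [show mQ + (eQ v - mQ) = eQ v from by ring, hQeq]
        have h1 : slP Q (mQ + (eP v - mP)) ≤ slP Q (mQ + (eQ v - mQ)) :=
          slP_anti hIQ (by linarith)
        have h2 := stoplossP (eP v - mP)
        have h3 : (2*v - 1) * slP P (mP + (eP v - mP))
            ≤ (2*v - 1) * slP Q (mQ + (eP v - mP)) :=
          mul_le_mul_of_nonneg_left h2 (by linarith)
        have h4 : (2*v - 1) * slP Q (mQ + (eP v - mP))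
            ≤ (2*v - 1) * slP Q (mQ + (eQ v - mQ)) :=
          mul_le_mul_of_nonneg_left h1 (by linarith)
        have h5 : (1 - v) * (eP v - mP) ≤ (1 - v) * (eQ v - mQ) := by linarith
        have h6 : eP v - mP ≤ eQ v - mQ := le_of_mul_le_mul_left h5 (by linarith)
        linarith
    have claim2 : eQ u - mQ ≤ eP u - mP := by
      rcases eq_or_lt_of_le huv with heq | hu2
      · rw [heq, hP12, hQ12]; simp
      · by_contra hcon
        push_neg at hcon
        have hPeq := isExp_M hIP (heP u huIoo)
        rw [hmP'] at hPeq
        have hQeq := isExp_M hIQ (heQ u huIoo)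
        rw [hmQ'] at hQeq
        have hPeq2 : (1 - 2*u) * slM P (mP + (eP u - mP)) = u * (-(eP u - mP)) := by
          rw [show mP + (eP u - mP) = eP u from by ring, hPeq]; ring
        have hQeq2 : (1 - 2*u) * slM Q (mQ + (eQ u - mQ)) = u * (-(eQ u - mQ)) := by
          rw [show mQ + (eQ u - mQ) = eQ u from by ring, hQeq]; ring
        have h1 : slM Q (mQ + (eP u - mP)) ≤ slM Q (mQ + (eQ u - mQ)) :=
          slM_mono hIQ (by linarith)
        have h2 := stoplossM (eP u - mP)
        have h3 : (1 - 2*u) * slM P (mP + (eP u - mP))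
            ≤ (1 - 2*u) * slM Q (mQ + (eP u - mP)) :=
          mul_le_mul_of_nonneg_left h2 (by linarith)
        have h4 : (1 - 2*u) * slM Q (mQ + (eP u - mP))
            ≤ (1 - 2*u) * slM Q (mQ + (eQ u - mQ)) :=
          mul_le_mul_of_nonneg_left h1 (by linarith)
        have h5 : u * (-(eP u - mP)) ≤ u * (-(eQ u - mQ)) := by linarith
        have h6 : -(eP u - mP) ≤ -(eQ u - mQ) := le_of_mul_le_mul_left h5 hu
        linarith
    linarith
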